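/- (Phragmén–Lindelöf type bound on a square) Let F be analytic on the closed square {λ = μ+iν : |μ| ≤ r, |ν| ≤ r} and suppose |F(λ)| ≤ M/|ν| throughout the square (for ν ≠ 0). Then |F(iν)| ≤ 3M/r for all real ν with |ν| ≤ r. In fact |F(λ)| ≤ 3rM/|λ² - r²| wherever defined in the square. -/

import Mathlib

/-- Phragmén–Lindelöf type bound on a square: if `F` is analytic on the closed square
`{μ+iν : |μ| ≤ r, |ν| ≤ r}` and `|F(μ+iν)| ≤ M/|ν|` there (for `ν ≠ 0`), then
`|F(iν)| ≤ 3M/r` for `|ν| ≤ r`; in fact `|F(λ)| ≤ 3rM/|λ² - r²|` on the square. -/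
theorem stmt12 (r M : ℝ) (hr : 0 < r) (hM : 0 < M) (F : ℂ → ℂ)
    (hF : ∀ z : ℂ, |z.re| ≤ r → |z.im| ≤ r → DifferentiableAt ℂ F z)
    (hbound : ∀ z : ℂ, |z.re| ≤ r → |z.im| ≤ r → z.im ≠ 0 →
      ‖F z‖ ≤ M / |z.im|) :
    (∀ ν : ℝ, |ν| ≤ r → ‖F ((ν : ℂ) * Complex.I)‖ ≤ 3 * M / r) ∧
    (∀ z : ℂ, |z.re| ≤ r → |z.im| ≤ r → z ^ 2 ≠ (r : ℂ) ^ 2 →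
      ‖F z‖ ≤ 3 * r * M / ‖z ^ 2 - (r : ℂ) ^ 2‖) := by
  have hrr : (-r : ℝ) < r := by linarith
  set U : Set ℂ := Set.Ioo (-r) r ×ℂ Set.Ioo (-r) r with hU
  have hclos : closure U = Set.Icc (-r) r ×ℂ Set.Icc (-r) r := by
    rw [hU, Complex.closure_reProdIm, closure_Ioo hrr.ne]
  set G : ℂ → ℂ := fun z => (z ^ 2 - (r : ℂ) ^ 2) * F z with hG
  -- the key estimate via maximum modulus
  have key : ∀ z : ℂ, |z.re| ≤ r → |z.im| ≤ r → ‖G z‖ ≤ 3 * r * M := by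
    intro z hre him
    have hzc : z ∈ closure U := by
      rw [hclos]
      exact ⟨Set.mem_Icc.2 (abs_le.1 hre), Set.mem_Icc.2 (abs_le.1 him)⟩
    have hdiff : DiffContOnCl ℂ G U := by
      apply DifferentiableOn.diffContOnCl
      intro w hw
      rw [hclos] at hw
      obtain ⟨hw1, hw2⟩ := hw
      exact (((differentiable_pow 2).differentiableAt.sub_const _).mul
        (hF w (abs_le.2 hw1) (abs_le.2 hw2))).differentiableWithinAt
    have hbdd : Bornology.IsBounded U :=
      (Metric.isBounded_Ioo _ _).reProdIm (Metric.isBounded_Ioo _ _)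
    have hfront : ∀ w ∈ frontier U, ‖G w‖ ≤ 3 * r * M := by
      intro w hw
      rw [hU, Complex.frontier_reProdIm, closure_Ioo hrr.ne, frontier_Ioo hrr] at hw
      rcases hw with ⟨hw1, hw2⟩ | ⟨hw1, hw2⟩ <;>
        simp only [Set.mem_preimage, Set.mem_Icc, Set.mem_insert_iff,
          Set.mem_singleton_iff] at hw1 hw2
      · -- horizontal edges: |im| = r
        have himw : |w.im| = r := by
          rcases hw2 with h | h
          · rw [h, abs_neg, abs_of_pos hr]
          · rw [h, abs_of_pos hr]
        have hFw : ‖F w‖ ≤ M / r := by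
          rw [← himw]
          exact hbound w (abs_le.2 ⟨hw1.1, hw1.2⟩) himw.le (by intro h; rw [h] at himw; simp at himw; linarith)
        have h1 : ‖w ^ 2 - (r : ℂ) ^ 2‖ ≤ 3 * r ^ 2 := by
          calc ‖w ^ 2 - (r : ℂ) ^ 2‖ ≤ ‖w ^ 2‖ + ‖(r : ℂ) ^ 2‖ :=
                norm_sub_le _ _
            _ = ‖w‖ ^ 2 + r ^ 2 := by
                rw [norm_pow, norm_pow, Complex.norm_real, Real.norm_eq_abs, abs_of_pos hr]
            _ ≤ 3 * r ^ 2 := by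
                have : ‖w‖ ^ 2 = w.re ^ 2 + w.im ^ 2 := by
                  rw [Complex.sq_norm, Complex.normSq_apply]; ring
                rw [this]
                have h2 : w.re ^ 2 ≤ r ^ 2 := by nlinarith [hw1.1, hw1.2]
                have h3 : w.im ^ 2 = r ^ 2 := by rw [← sq_abs, himw]
                nlinarith
        calc ‖G w‖ = ‖w ^ 2 - (r : ℂ) ^ 2‖ * ‖F w‖ := by
              rw [hG]; simp [norm_mul]
          _ ≤ (3 * r ^ 2) * (M / r) := by
              apply mul_le_mul h1 hFw (norm_nonneg _) (by positivity)
          _ = 3 * r * M := by field_simp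
      · -- vertical edges: |re| = r
        rcases eq_or_ne w.im 0 with him0 | him0
        · -- corner on real axis: z = ±r, G = 0
          have hw' : w = (w.re : ℂ) := by
            apply Complex.ext <;> simp [him0]
          have : w ^ 2 = (r : ℂ) ^ 2 := by
            rw [hw']
            rcases hw1 with h | h <;> rw [h] <;> push_cast <;> ring
          rw [hG]; simp [this]; positivity
        · have himle : |w.im| ≤ r := abs_le.2 hw2
          have hFw : ‖F w‖ ≤ M / |w.im| := by
            apply hbound w _ himle him0
            rcases hw1 with h | h
            · rw [h, abs_neg, abs_of_pos hr]
            · rw [h, abs_of_pos hr]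
          have hfac : ‖w ^ 2 - (r : ℂ) ^ 2‖ ≤ 3 * r * |w.im| := by
            have hfactor : w ^ 2 - (r : ℂ) ^ 2 = (w - r) * (w + r) := by ring
            rw [hfactor, norm_mul]
            rcases hw1 with h | h
            · -- re = -r : |w + r| = |im|, |w - r| ≤ 3r
              have e1 : ‖w + r‖ = |w.im| := by
                rw [Complex.norm_def, Complex.normSq_apply]
                simp [h]
                rw [← Real.sqrt_sq_eq_abs]; ring_nf
              have e2 : ‖w - r‖ ≤ 3 * r := by
                calc ‖w - r‖ ≤ |(w - (r:ℂ)).re| + |(w - (r:ℂ)).im| :=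
                      Complex.norm_le_abs_re_add_abs_im _
                  _ ≤ 3 * r := by
                      simp only [Complex.sub_re, Complex.sub_im, Complex.ofReal_re,
                        Complex.ofReal_im, h, sub_zero]
                      rw [show (-r - r : ℝ) = -(r + r) by ring, abs_neg,
                        abs_of_nonneg (by linarith : (0:ℝ) ≤ r + r)]
                      linarith [himle]
              calc ‖w - r‖ * ‖w + r‖ ≤ (3 * r) * |w.im| := by
                    rw [e1]; exact mul_le_mul_of_nonneg_right e2 (abs_nonneg _)
                _ = 3 * r * |w.im| := rfl
            · -- re = r : |w - r| = |im|, |w + r| ≤ 3r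
              have e1 : ‖w - r‖ = |w.im| := by
                rw [Complex.norm_def, Complex.normSq_apply]
                simp [h]
                rw [← Real.sqrt_sq_eq_abs]; ring_nf
              have e2 : ‖w + r‖ ≤ 3 * r := by
                calc ‖w + r‖ ≤ |(w + (r:ℂ)).re| + |(w + (r:ℂ)).im| :=
                      Complex.norm_le_abs_re_add_abs_im _
                  _ ≤ 3 * r := by
                      simp only [Complex.add_re, Complex.add_im, Complex.ofReal_re,
                        Complex.ofReal_im, h, add_zero]
                      rw [abs_of_nonneg (by linarith : (0:ℝ) ≤ r + r)]
                      linarith [himle]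
              calc ‖w - r‖ * ‖w + r‖ ≤ |w.im| * (3 * r) := by
                    rw [e1]; exact mul_le_mul_of_nonneg_left e2 (abs_nonneg _)
                _ = 3 * r * |w.im| := by ring
          calc ‖G w‖ = ‖w ^ 2 - (r : ℂ) ^ 2‖ * ‖F w‖ := by
                rw [hG]; simp [norm_mul]
            _ ≤ (3 * r * |w.im|) * (M / |w.im|) := by
                apply mul_le_mul hfac hFw (norm_nonneg _) (by positivity)
            _ = 3 * r * M := by
                field_simp
    exact Complex.norm_le_of_forall_mem_frontier_norm_le hbdd hdiff hfront hzc
  constructor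
  · intro ν hν
    set z : ℂ := (ν : ℂ) * Complex.I with hz
    have hre : |z.re| ≤ r := by simp [hz]; positivity
    have him : |z.im| ≤ r := by simpa [hz] using hν
    have hkey := key z hre him
    have hzsq : z ^ 2 - (r : ℂ) ^ 2 = -((ν:ℂ)^2 + (r:ℂ)^2) := by
      rw [hz]; simp [mul_pow, Complex.I_sq]; ring
    have habs : ‖z ^ 2 - (r : ℂ) ^ 2‖ = ν ^ 2 + r ^ 2 := by
      rw [hzsq, norm_neg]
      have : ((ν:ℂ)^2 + (r:ℂ)^2) = ((ν^2 + r^2 : ℝ) : ℂ) := by push_cast; ring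
      rw [this, Complex.norm_real, Real.norm_eq_abs, abs_of_pos (by positivity)]
    rw [hG, norm_mul, habs] at hkey
    have hge : r ^ 2 ≤ ν ^ 2 + r ^ 2 := by nlinarith
    have h1 : (ν ^ 2 + r ^ 2) * ‖F z‖ ≤ 3 * r * M := hkey
    have h2 : r ^ 2 * ‖F z‖ ≤ 3 * r * M := by
      calc r ^ 2 * ‖F z‖ ≤ (ν ^ 2 + r ^ 2) * ‖F z‖ :=
            mul_le_mul_of_nonneg_right hge (norm_nonneg _)
        _ ≤ 3 * r * M := h1
    rw [le_div_iff₀ hr]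
    nlinarith [h2, hr, norm_nonneg (F z)]
  · intro z hre him hne
    have hkey := key z hre him
    rw [hG, norm_mul] at hkey
    have hpos : 0 < ‖z ^ 2 - (r : ℂ) ^ 2‖ := by
      rw [norm_pos_iff]
      exact sub_ne_zero.2 hne
    rw [le_div_iff₀ hpos]
    linarith [hkey]
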